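/- Let 1 ≤ p ≤ n and identify ℝⁿ = ℝ^{n−p} × ℝ^p, writing v = (v_⊥, v_Y), and correspondingly ℝ^{n+1} = ℝ^{n−p+1} × ℝ^p. For every v ∈ ℝⁿ, write Θ_n(v) = (η, μ) with η ∈ ℝ^{n−p+1} and μ ∈ ℝ^p. Then η ≠ 0 and ( η/‖η‖ , (‖η‖, μ) ) = ( Θ_{n−p}(v_⊥) , Θ_p( (1+‖v_⊥‖²)^{-1/2}·v_Y ) ). In other words, under the splitting map (η,μ) ↦ (η/‖η‖, (‖η‖,μ)), the compactified space splits as a product in which the first factor is the spherical compactification of the quotient X/Y (the extension of the orthogonal projection v ↦ v_⊥) and the second factor is the spherical compactification of Y via the map χ(v) = (1+‖v_⊥‖²)^{-1/2} v_Y. -/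

import Mathlib

noncomputable section

/-- The euclidean norm on `ℝ^{m+1} = ℝ × ℝ^m`. -/
def eNorm {m : ℕ} (y : ℝ × EuclideanSpace ℝ (Fin m)) : ℝ :=
  Real.sqrt (y.1 ^ 2 + ‖y.2‖ ^ 2)

/-- The map `Θ_m(x) = (1+‖x‖²)^{-1/2}(1, x)` into the sphere `S^m ⊂ ℝ × ℝ^m`. -/
def thetaMap {m : ℕ} (x : EuclideanSpace ℝ (Fin m)) : ℝ × EuclideanSpace ℝ (Fin m) :=
  (Real.sqrt (1 + ‖x‖ ^ 2))⁻¹ • ((1 : ℝ), x)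

/-- Writing `ℝⁿ = ℝ^{n−p} × ℝ^p`, `v = (v_⊥, v_Y)`, and
`Θ_n(v) = (η, μ)` with `η ∈ ℝ^{n−p+1} = ℝ × ℝ^{n−p}` and `μ ∈ ℝ^p`, one has `η ≠ 0` and
`(η/‖η‖, (‖η‖, μ)) = (Θ_{n−p}(v_⊥), Θ_p((1+‖v_⊥‖²)^{-1/2}·v_Y))`: under the splitting
map `(η,μ) ↦ (η/‖η‖, (‖η‖,μ))` the compactification splits as a product of the
compactification of `X/Y` and the compactification of `Y`. -/
theorem statement8 (n p : ℕ) (hp : 1 ≤ p) (hpn : p ≤ n)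
    (vperp : EuclideanSpace ℝ (Fin (n - p))) (vY : EuclideanSpace ℝ (Fin p))
    (η : ℝ × EuclideanSpace ℝ (Fin (n - p))) (μ : EuclideanSpace ℝ (Fin p))
    (hη : η = (Real.sqrt (1 + (‖vperp‖ ^ 2 + ‖vY‖ ^ 2)))⁻¹ • ((1 : ℝ), vperp))
    (hμ : μ = (Real.sqrt (1 + (‖vperp‖ ^ 2 + ‖vY‖ ^ 2)))⁻¹ • vY) :
    η ≠ 0 ∧
    (eNorm η)⁻¹ • η = thetaMap vperp ∧
    ((eNorm η, μ) : ℝ × EuclideanSpace ℝ (Fin p)) =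
      thetaMap ((Real.sqrt (1 + ‖vperp‖ ^ 2))⁻¹ • vY) := by
  have ha : (0:ℝ) ≤ ‖vperp‖ ^ 2 := sq_nonneg _
  have hb : (0:ℝ) ≤ ‖vY‖ ^ 2 := sq_nonneg _
  set a := ‖vperp‖ ^ 2 with haa
  set b := ‖vY‖ ^ 2 with hbb
  have h1 : (0:ℝ) < 1 + a := by linarith
  have h2 : (0:ℝ) < 1 + (a + b) := by linarith
  have hs : 0 < Real.sqrt (1 + (a + b)) := Real.sqrt_pos.2 h2
  have hsa : 0 < Real.sqrt (1 + a) := Real.sqrt_pos.2 h1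
  have hsq : Real.sqrt (1 + (a+b)) ^ 2 = 1 + (a+b) := Real.sq_sqrt h2.le
  have hsqa : Real.sqrt (1 + a) ^ 2 = 1 + a := Real.sq_sqrt h1.le
  have heη : eNorm η = Real.sqrt (1 + a) / Real.sqrt (1 + (a + b)) := by
    subst hη
    have hn : ‖(Real.sqrt (1 + (a + b)))⁻¹ • vperp‖ ^ 2
        = (Real.sqrt (1+(a+b)))⁻¹ ^ 2 * a := by
      rw [norm_smul, mul_pow]
      simp [abs_of_pos (inv_pos.2 hs), haa]
    simp only [eNorm, Prod.smul_fst, Prod.smul_snd, smul_eq_mul, mul_one, hn]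
    rw [show (Real.sqrt (1+(a+b)))⁻¹ ^ 2 + (Real.sqrt (1+(a+b)))⁻¹ ^ 2 * a
        = (1 + a) / (1 + (a+b)) by rw [← hsq]; field_simp; rw [Real.sqrt_sq hs.le]]
    rw [Real.sqrt_div h1.le]
  refine ⟨?_, ?_, ?_⟩
  · subst hη
    intro h
    have := congrArg Prod.fst h
    simp only [Prod.smul_fst, smul_eq_mul, mul_one, Prod.fst_zero] at this
    exact (inv_pos.2 hs).ne' this
  · subst hη
    rw [heη, smul_smul, thetaMap]
    congr 1
    rw [← haa]
    field_simp
  · have hw : ‖(Real.sqrt (1 + a))⁻¹ • vY‖ ^ 2 = (Real.sqrt (1+a))⁻¹ ^ 2 * b := by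
      rw [norm_smul, mul_pow]
      simp [abs_of_pos (inv_pos.2 hsa), hbb]
    have hkey : Real.sqrt (1 + ‖(Real.sqrt (1 + a))⁻¹ • vY‖ ^ 2)
        = Real.sqrt (1 + (a+b)) / Real.sqrt (1 + a) := by
      rw [hw, show (1:ℝ) + (Real.sqrt (1+a))⁻¹ ^ 2 * b = (1 + (a+b)) / (1+a) by
        rw [← hsqa]; field_simp; rw [Real.sqrt_sq hsa.le, hsqa]; ring, Real.sqrt_div h2.le]
    rw [thetaMap, hkey, heη, hμ, Prod.ext_iff]
    constructor
    · simp [inv_div]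
    · simp only [Prod.smul_snd, smul_smul, inv_div]
      congr 1
      field_simp
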